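/- For every countable group G there exists a set R of positive words of length at most 3 in the free group on generators {gₙ : n ∈ ℕ} presenting G, such that for each n, the generator gₙ occurs in at most four relators of R. -/

import Mathlib

/-- The generator with index `i` occurs as a letter of the word `w` in the free group on `ℕ`. -/
def Occurs (i : ℕ) (w : FreeGroup ℕ) : Prop := ∃ p ∈ w.toWord, p.1 = i

/-- `w` is a product of at most three generators (no inverses) of the free group on `ℕ`. -/
def IsPosWordLen3 (w : FreeGroup ℕ) : Prop :=
  (∃ i, w = FreeGroup.of i) ∨
  (∃ i j, w = FreeGroup.of i * FreeGroup.of j) ∨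
  (∃ i j k, w = FreeGroup.of i * FreeGroup.of j * FreeGroup.of k)

namespace CGP4

open scoped Classical

/-- `x`-generators: the `t`-th copy of the element coded by chain `n`. -/
def Xg (n t : ℕ) : FreeGroup ℕ := FreeGroup.of (3 * Nat.pair n t)
/-- `u`-generators: inverse copies. -/
def Ug (n t : ℕ) : FreeGroup ℕ := FreeGroup.of (3 * Nat.pair n t + 1)
/-- junk generators, killed by length-1 relators. -/
def Jg (q : ℕ) : FreeGroup ℕ := FreeGroup.of (3 * q + 2)

variable {G : Type} [Group G]

/-- least index of `g` under the surjection `f`. -/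
noncomputable def idx (f : ℕ → G) (hf : Function.Surjective f) (g : G) : ℕ :=
  Nat.find (hf g)

lemma f_idx (f : ℕ → G) (hf : Function.Surjective f) (g : G) : f (idx f hf g) = g :=
  Nat.find_spec (hf g)

/-- multiplication-table relator for the pair `(m, n)`. -/
noncomputable def Tg (f : ℕ → G) (hf : Function.Surjective f) (m n : ℕ) : FreeGroup ℕ :=
  Xg m (2 * Nat.pair m n) * Xg n (2 * Nat.pair m n + 1) *
    Ug (idx f hf (f m * f n)) (Nat.pair m n)

/-- The relator set. -/
noncomputable def Rset (f : ℕ → G) (hf : Function.Surjective f) : Set (FreeGroup ℕ) :=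
  {w | (∃ q, w = Jg q) ∨ (∃ n t, w = Xg n t * Ug n t) ∨
    (∃ n t, w = Ug n t * Xg n (t + 1)) ∨ (∃ m n, w = Tg f hf m n)}

/- ### word computations -/

lemma toWord_of_of (a b : ℕ) :
    (FreeGroup.of a * FreeGroup.of b).toWord = [(a, true), (b, true)] := by
  rw [show FreeGroup.of a = FreeGroup.mk [(a,true)] from rfl,
      show FreeGroup.of b = FreeGroup.mk [(b,true)] from rfl,
      FreeGroup.mul_mk, FreeGroup.toWord_mk]
  simp [FreeGroup.reduce]

lemma toWord_of_of_of (a b c : ℕ) :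
    (FreeGroup.of a * FreeGroup.of b * FreeGroup.of c).toWord
      = [(a, true), (b, true), (c, true)] := by
  rw [show FreeGroup.of a = FreeGroup.mk [(a,true)] from rfl,
      show FreeGroup.of b = FreeGroup.mk [(b,true)] from rfl,
      show FreeGroup.of c = FreeGroup.mk [(c,true)] from rfl,
      FreeGroup.mul_mk, FreeGroup.mul_mk, FreeGroup.toWord_mk]
  simp [FreeGroup.reduce]

lemma occurs_of {i a : ℕ} : Occurs i (FreeGroup.of a) ↔ a = i := by
  simp [Occurs, FreeGroup.toWord_of]

lemma occurs_of_of {i a b : ℕ} :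
    Occurs i (FreeGroup.of a * FreeGroup.of b) ↔ a = i ∨ b = i := by
  simp [Occurs, toWord_of_of]

lemma occurs_of_of_of {i a b c : ℕ} :
    Occurs i (FreeGroup.of a * FreeGroup.of b * FreeGroup.of c) ↔ a = i ∨ b = i ∨ c = i := by
  simp [Occurs, toWord_of_of_of]

lemma unpair_of_eq {a b q : ℕ} (h : Nat.pair a b = q) :
    a = (Nat.unpair q).1 ∧ b = (Nat.unpair q).2 := by subst h; simp

/- ### occurrence counting -/

lemma occ_subset (f : ℕ → G) (hf : Function.Surjective f) (i : ℕ) :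
    ∃ a b c : FreeGroup ℕ, {w ∈ Rset f hf | Occurs i w} ⊆ {a, b, c} := by
  set q := i / 3 with hq
  set n := (Nat.unpair q).1 with hn
  set t := (Nat.unpair q).2 with ht
  have hmod : i % 3 = 0 ∨ i % 3 = 1 ∨ i % 3 = 2 := by omega
  rcases hmod with hr | hr | hr
  · refine ⟨Xg n t * Ug n t, Ug n (t - 1) * Xg n t,
      Tg f hf (Nat.unpair (t / 2)).1 (Nat.unpair (t / 2)).2, ?_⟩
    rintro w ⟨hw, ho⟩
    rcases hw with ⟨q', rfl⟩ | ⟨n', t', rfl⟩ | ⟨n', t', rfl⟩ | ⟨m, n₂, rfl⟩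
    · rw [Jg, occurs_of] at ho; omega
    · rw [Xg, Ug, occurs_of_of] at ho
      rcases ho with h | h
      · obtain ⟨h1, h2⟩ := unpair_of_eq (show Nat.pair n' t' = q by omega)
        rw [← hn] at h1; rw [← ht] at h2; subst h1; subst h2; left; rfl
      · omega
    · rw [Xg, Ug, occurs_of_of] at ho
      rcases ho with h | h
      · omega
      · obtain ⟨h1, h2⟩ := unpair_of_eq (show Nat.pair n' (t' + 1) = q by omega)
        rw [← hn] at h1; rw [← ht] at h2
        subst h1
        right; left
        have : t' = t - 1 := by omega
        rw [this, show t - 1 + 1 = t by omega]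
    · rw [Tg, Xg, Xg, Ug, occurs_of_of_of] at ho
      rcases ho with h | h | h
      · obtain ⟨h1, h2⟩ := unpair_of_eq
          (show Nat.pair m (2 * Nat.pair m n₂) = q by omega)
        rw [← ht] at h2
        right; right
        have h3 : t / 2 = Nat.pair m n₂ := by omega
        rw [h3, Nat.unpair_pair]
        rfl
      · obtain ⟨h1, h2⟩ := unpair_of_eq
          (show Nat.pair n₂ (2 * Nat.pair m n₂ + 1) = q by omega)
        rw [← ht] at h2
        right; right
        have h3 : t / 2 = Nat.pair m n₂ := by omega
        rw [h3, Nat.unpair_pair]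
        rfl
      · omega
  · refine ⟨Xg n t * Ug n t, Ug n t * Xg n (t + 1),
      Tg f hf (Nat.unpair t).1 (Nat.unpair t).2, ?_⟩
    rintro w ⟨hw, ho⟩
    rcases hw with ⟨q', rfl⟩ | ⟨n', t', rfl⟩ | ⟨n', t', rfl⟩ | ⟨m, n₂, rfl⟩
    · rw [Jg, occurs_of] at ho; omega
    · rw [Xg, Ug, occurs_of_of] at ho
      rcases ho with h | h
      · omega
      · obtain ⟨h1, h2⟩ := unpair_of_eq (show Nat.pair n' t' = q by omega)
        rw [← hn] at h1; rw [← ht] at h2; subst h1; subst h2; left; rfl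
    · rw [Xg, Ug, occurs_of_of] at ho
      rcases ho with h | h
      · obtain ⟨h1, h2⟩ := unpair_of_eq (show Nat.pair n' t' = q by omega)
        rw [← hn] at h1; rw [← ht] at h2; subst h1; subst h2; right; left; rfl
      · omega
    · rw [Tg, Xg, Xg, Ug, occurs_of_of_of] at ho
      rcases ho with h | h | h
      · omega
      · omega
      · obtain ⟨h1, h2⟩ := unpair_of_eq
          (show Nat.pair (idx f hf (f m * f n₂)) (Nat.pair m n₂) = q by omega)
        rw [← ht] at h2
        right; right
        rw [← h2, Nat.unpair_pair]
        rfl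
  · refine ⟨Jg q, Jg q, Jg q, ?_⟩
    rintro w ⟨hw, ho⟩
    rcases hw with ⟨q', rfl⟩ | ⟨n', t', rfl⟩ | ⟨n', t', rfl⟩ | ⟨m, n₂, rfl⟩
    · rw [Jg, occurs_of] at ho
      have : q' = q := by omega
      subst this; left; rfl
    · rw [Xg, Ug, occurs_of_of] at ho; omega
    · rw [Xg, Ug, occurs_of_of] at ho; omega
    · rw [Tg, Xg, Xg, Ug, occurs_of_of_of] at ho; omega

/- ### the quotient group -/

variable (f : ℕ → G) (hf : Function.Surjective f)

local notation "Q" => FreeGroup ℕ ⧸ Subgroup.normalClosure (Rset f hf)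

lemma rel_one {w : FreeGroup ℕ} (hw : w ∈ Rset f hf) :
    (QuotientGroup.mk w : Q) = 1 :=
  (QuotientGroup.eq_one_iff w).mpr (Subgroup.subset_normalClosure hw)

noncomputable def sQ (n : ℕ) : Q := QuotientGroup.mk (Xg n 0)

lemma mkU (n t : ℕ) :
    (QuotientGroup.mk (Ug n t) : Q) = (QuotientGroup.mk (Xg n t) : Q)⁻¹ := by
  have h := rel_one f hf (Or.inr (Or.inl ⟨n, t, rfl⟩))
  rw [QuotientGroup.mk_mul] at h
  exact eq_inv_of_mul_eq_one_right h

lemma mkX_succ (n t : ℕ) :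
    (QuotientGroup.mk (Xg n (t + 1)) : Q) = (QuotientGroup.mk (Xg n t) : Q) := by
  have h := rel_one f hf (Or.inr (Or.inr (Or.inl ⟨n, t, rfl⟩)))
  rw [QuotientGroup.mk_mul, mkU f hf] at h
  exact (inv_mul_eq_one.mp h).symm

lemma mkX (n t : ℕ) : (QuotientGroup.mk (Xg n t) : Q) = sQ f hf n := by
  induction t with
  | zero => rfl
  | succ t ih => rw [mkX_succ f hf, ih]

lemma mkU' (n t : ℕ) :
    (QuotientGroup.mk (Ug n t) : Q) = (sQ f hf n)⁻¹ := by
  rw [mkU f hf, mkX f hf]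

lemma table (m n : ℕ) :
    sQ f hf m * sQ f hf n = sQ f hf (idx f hf (f m * f n)) := by
  have h := rel_one f hf (Or.inr (Or.inr (Or.inr ⟨m, n, rfl⟩)))
  rw [Tg, QuotientGroup.mk_mul, QuotientGroup.mk_mul, mkX f hf, mkX f hf, mkU' f hf] at h
  rw [mul_inv_eq_one] at h
  exact h

lemma sQ_idx_one : sQ f hf (idx f hf 1) = 1 := by
  have h := table f hf (idx f hf 1) (idx f hf 1)
  rw [f_idx f hf, one_mul] at h
  exact right_eq_mul.mp h.symm

lemma sQ_eq (n : ℕ) : sQ f hf n = sQ f hf (idx f hf (f n)) := by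
  have h := table f hf (idx f hf 1) n
  rw [f_idx f hf, one_mul, sQ_idx_one f hf, one_mul] at h
  exact h

/-- the section `G → Q` as a homomorphism. -/
noncomputable def sig : G →* Q :=
  MonoidHom.mk' (fun g => sQ f hf (idx f hf g)) (by
    intro a b
    have h := table f hf (idx f hf a) (idx f hf b)
    rw [f_idx f hf, f_idx f hf] at h
    exact h.symm)

/-- value of generator `i` in `G`. -/
noncomputable def vmap (i : ℕ) : G :=
  if i % 3 = 0 then f ((Nat.unpair (i / 3)).1)
  else if i % 3 = 1 then (f ((Nat.unpair (i / 3)).1))⁻¹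
  else 1

lemma vmap_x (n t : ℕ) : vmap f (3 * Nat.pair n t) = f n := by
  have h1 : (3 * Nat.pair n t) % 3 = 0 := by omega
  have h2 : (3 * Nat.pair n t) / 3 = Nat.pair n t := by omega
  simp [vmap, h1, h2]

lemma vmap_u (n t : ℕ) : vmap f (3 * Nat.pair n t + 1) = (f n)⁻¹ := by
  have h1 : (3 * Nat.pair n t + 1) % 3 = 1 := by omega
  have h2 : (3 * Nat.pair n t + 1) / 3 = Nat.pair n t := by omega
  simp [vmap, h1, h2]

lemma vmap_j (q : ℕ) : vmap f (3 * q + 2) = 1 := by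
  have h1 : (3 * q + 2) % 3 = 2 := by omega
  simp [vmap, h1]

lemma lift_rel {w : FreeGroup ℕ} (hw : w ∈ Rset f hf) :
    FreeGroup.lift (vmap f) w = 1 := by
  rcases hw with ⟨q, rfl⟩ | ⟨n, t, rfl⟩ | ⟨n, t, rfl⟩ | ⟨m, n, rfl⟩
  · rw [Jg, FreeGroup.lift_apply_of, vmap_j]
  · rw [Xg, Ug, map_mul, FreeGroup.lift_apply_of, FreeGroup.lift_apply_of, vmap_x, vmap_u, mul_inv_cancel]
  · rw [Xg, Ug, map_mul, FreeGroup.lift_apply_of, FreeGroup.lift_apply_of, vmap_x, vmap_u, inv_mul_cancel]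
  · rw [Tg, Xg, Xg, Ug, map_mul, map_mul, FreeGroup.lift_apply_of, FreeGroup.lift_apply_of,
      FreeGroup.lift_apply_of, vmap_x, vmap_x, vmap_u, f_idx f hf, mul_inv_cancel]

/-- the projection `Q → G`. -/
noncomputable def proj : Q →* G :=
  QuotientGroup.lift (Subgroup.normalClosure (Rset f hf)) (FreeGroup.lift (vmap f))
    (fun x hx => by
      refine Subgroup.normalClosure_le_normal ?_ hx
      intro w hw
      exact lift_rel f hf hw)

lemma proj_sig (g : G) : proj f hf (sig f hf g) = g := by
  show proj f hf (sQ f hf (idx f hf g)) = g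
  rw [sQ, proj, Xg, QuotientGroup.lift_mk, FreeGroup.lift_apply_of, vmap_x, f_idx f hf]

lemma sig_surjective : Function.Surjective (sig f hf) := by
  intro x
  obtain ⟨w, rfl⟩ := QuotientGroup.mk_surjective x
  have : (QuotientGroup.mk w : Q) ∈ (sig f hf).range := by
    induction w using FreeGroup.induction_on with
    | C1 => rw [QuotientGroup.mk_one]; exact one_mem _
    | of i =>
      have hmod : i % 3 = 0 ∨ i % 3 = 1 ∨ i % 3 = 2 := by omega
      set n0 := (Nat.unpair (i / 3)).1 with hn0
      set t0 := (Nat.unpair (i / 3)).2 with ht0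
      rcases hmod with hr | hr | hr
      · have hi : i = 3 * Nat.pair n0 t0 := by rw [hn0, ht0, Nat.pair_unpair]; omega
        refine ⟨f n0, ?_⟩
        show sig f hf (f n0) = (QuotientGroup.mk (FreeGroup.of i) : _)
        have h1 : (QuotientGroup.mk (FreeGroup.of i) : Q) = sQ f hf n0 := by
          rw [hi]; exact CGP4.mkX f hf n0 t0
        rw [h1]
        show sQ f hf (idx f hf (f n0)) = sQ f hf n0
        exact (sQ_eq f hf n0).symm
      · have hi : i = 3 * Nat.pair n0 t0 + 1 := by rw [hn0, ht0, Nat.pair_unpair]; omega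
        refine ⟨(f n0)⁻¹, ?_⟩
        show sig f hf (f n0)⁻¹ = (QuotientGroup.mk (FreeGroup.of i) : _)
        have h1 : (QuotientGroup.mk (FreeGroup.of i) : Q) = (sQ f hf n0)⁻¹ := by
          rw [hi]; exact mkU' f hf n0 t0
        rw [h1, map_inv]
        congr 1
        show sQ f hf (idx f hf (f n0)) = sQ f hf n0
        exact (sQ_eq f hf n0).symm
      · show (QuotientGroup.mk (FreeGroup.of i) : _) ∈ (sig f hf).range
        have hi : FreeGroup.of i = Jg (i / 3) := by rw [Jg]; congr 1; omega
        rw [hi, rel_one f hf (Or.inl ⟨i / 3, rfl⟩)]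
        exact one_mem _
    | inv_of i ih =>
      rw [QuotientGroup.mk_inv]
      exact inv_mem ih
    | mul x y ihx ihy =>
      rw [QuotientGroup.mk_mul]
      exact mul_mem ihx ihy
  exact this

lemma sig_injective : Function.Injective (sig f hf) :=
  Function.LeftInverse.injective (proj_sig f hf)

end CGP4

/-- Every countable group is presented by a set `R` of positive words of length at most 3 in
the free group on generators `gₙ, n ∈ ℕ`, such that each generator `gₙ` occurs in at most
four relators of `R`. -/
theorem countable_group_presentation_four_occurrences
    (G : Type) [Group G] [Countable G] :
    ∃ R : Set (FreeGroup ℕ),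
      (∀ w ∈ R, IsPosWordLen3 w) ∧
      (∀ i, {w ∈ R | Occurs i w}.Finite ∧ {w ∈ R | Occurs i w}.ncard ≤ 4) ∧
      Nonempty (G ≃* FreeGroup ℕ ⧸ Subgroup.normalClosure R) := by
  obtain ⟨f, hf⟩ := exists_surjective_nat G
  refine ⟨CGP4.Rset f hf, ?_, ?_, ?_⟩
  · rintro w (⟨q, rfl⟩ | ⟨n, t, rfl⟩ | ⟨n, t, rfl⟩ | ⟨m, n, rfl⟩)
    · exact Or.inl ⟨_, rfl⟩
    · exact Or.inr (Or.inl ⟨_, _, rfl⟩)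
    · exact Or.inr (Or.inl ⟨_, _, rfl⟩)
    · exact Or.inr (Or.inr ⟨_, _, _, rfl⟩)
  · intro i
    obtain ⟨a, b, c, hsub⟩ := CGP4.occ_subset f hf i
    have hfin3 : ({a, b, c} : Set (FreeGroup ℕ)).Finite := by
      exact (Set.finite_singleton c).insert b |>.insert a
    constructor
    · exact hfin3.subset hsub
    · calc {w ∈ CGP4.Rset f hf | Occurs i w}.ncard ≤ ({a, b, c} : Set (FreeGroup ℕ)).ncard :=
            Set.ncard_le_ncard hsub hfin3
        _ ≤ 3 := by
            calc ({a, b, c} : Set (FreeGroup ℕ)).ncard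
                ≤ ({b, c} : Set (FreeGroup ℕ)).ncard + 1 := Set.ncard_insert_le _ _
              _ ≤ (({c} : Set (FreeGroup ℕ)).ncard + 1) + 1 := by
                  have := Set.ncard_insert_le b ({c} : Set (FreeGroup ℕ)); omega
              _ ≤ 3 := by rw [Set.ncard_singleton]
        _ ≤ 4 := by omega
  · exact ⟨MulEquiv.ofBijective (CGP4.sig f hf)
      ⟨CGP4.sig_injective f hf, CGP4.sig_surjective f hf⟩⟩
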